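/- Every indecomposable nilpotent representation M of the equioriented cycle Δ_n is isomorphic to U(i;ℓ) for some i ∈ Z/nZ and some ℓ ≥ 1. -/

import Mathlib

/-- The shift operator of the indecomposable representation `U(i;ℓ)`:
`A w_k = w_{k+1}` for `k < ℓ` and `A w_ℓ = 0`. -/
noncomputable def shiftL (ℓ : ℕ) : (Fin ℓ → ℂ) →ₗ[ℂ] (Fin ℓ → ℂ) where
  toFun v m := if h : (m : ℕ) = 0 then 0
    else v ⟨(m : ℕ) - 1, lt_of_le_of_lt (Nat.sub_le _ _) m.isLt⟩
  map_add' u v := by funext m; by_cases h : (m : ℕ) = 0 <;> simp [h]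
  map_smul' c v := by funext m; by_cases h : (m : ℕ) = 0 <;> simp [h]

/-- The `ℤ/nℤ`-grading of `U(i;ℓ)`: the basis vector `w_k` has degree `i + k - ℓ` mod `n`. -/
noncomputable def UiGrade (n : ℕ) (i : ZMod n) (ℓ : ℕ) (d : ZMod n) :
    Submodule ℂ (Fin ℓ → ℂ) :=
  Submodule.span ℂ
    {v | ∃ k : Fin ℓ, i + (((k : ℕ) + 1 : ℕ) : ZMod n) - ((ℓ : ℕ) : ZMod n) = d ∧
      v = Pi.single k 1}

/-- Every indecomposable nilpotent representation `M` of the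
equioriented cycle `Δ_n` — modelled as a finite-dimensional `ℤ/nℤ`-graded complex vector
space `V = ⊕ M i` with an endomorphism `A` with `A (M i) ⊆ M (i+1)` — is isomorphic, as a
representation (a grading-preserving linear equivalence intertwining the endomorphisms),
to `U(i;ℓ)` for some vertex `i` and some `ℓ ≥ 1`. -/
theorem indecomposable_nilpotent_iso_Ui
    (n : ℕ) (V : Type) [AddCommGroup V] [Module ℂ V] [FiniteDimensional ℂ V]
    (M : ZMod n → Submodule ℂ V) (hM : DirectSum.IsInternal M)
    (A : V →ₗ[ℂ] V) (hA : ∀ i : ZMod n, (M i).map A ≤ M (i + 1))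
    -- nilpotency of the representation
    (hnil : ∃ N : ℕ, ∀ i : ZMod n, ∀ x ∈ M i, (A ^ N) x = 0)
    -- indecomposability: nonzero, and no splitting into two nonzero graded A-stable parts
    (hne : (⊤ : Submodule ℂ V) ≠ ⊥)
    (hindec : ∀ p q : Submodule ℂ V,
      (p = ⨆ d : ZMod n, p ⊓ M d) → (q = ⨆ d : ZMod n, q ⊓ M d) →
      p.map A ≤ p → q.map A ≤ q → IsCompl p q → p = ⊥ ∨ q = ⊥) :
    ∃ (i : ZMod n) (ℓ : ℕ), 1 ≤ ℓ ∧
      ∃ e : V ≃ₗ[ℂ] (Fin ℓ → ℂ),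
        (∀ d : ZMod n, (M d).map (e : V →ₗ[ℂ] (Fin ℓ → ℂ)) = UiGrade n i ℓ d) ∧
        ∀ v : V, e (A v) = shiftL ℓ (e v) := by
  classical
  haveI := hM.chooseDecomposition
  haveI : ∀ (i : ZMod n) (x : M i), Decidable (x ≠ 0) := fun _ _ => Classical.dec _
  -- the supremum of the grading is everything
  have hsup : (⨆ d : ZMod n, M d) = ⊤ := hM.submodule_iSup_eq_top
  -- A is nilpotent
  obtain ⟨N, hN⟩ := hnil
  have hAN : A ^ N = 0 := by
    have : (⊤ : Submodule ℂ V) ≤ LinearMap.ker (A ^ N) := by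
      rw [← hsup]
      exact iSup_le fun i x hx => LinearMap.mem_ker.2 (hN i x hx)
    ext x
    simpa using LinearMap.mem_ker.1 (this (Submodule.mem_top (x := x)))
  have hEx : ∃ m : ℕ, A ^ m = 0 := ⟨N, hAN⟩
  set ℓ := Nat.find hEx with hℓdef
  have hℓ0 : A ^ ℓ = 0 := Nat.find_spec hEx
  obtain ⟨x0, hx0⟩ : ∃ x : V, x ≠ 0 := by
    by_contra h
    push_neg at h
    exact hne (by ext x; simp [h x])
  have hℓpos : 1 ≤ ℓ := by
    rcases Nat.eq_zero_or_pos ℓ with h | h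
    · exfalso
      have := hℓ0
      rw [h, pow_zero] at this
      exact hx0 (by simpa using LinearMap.congr_fun this x0)
    · exact h
  have hℓ1 : A ^ (ℓ - 1) ≠ 0 := Nat.find_min hEx (by omega)
  -- a homogeneous vector not killed by A^(ℓ-1)
  obtain ⟨i₀, v, hv, hvne⟩ : ∃ (i₀ : ZMod n) (v : V), v ∈ M i₀ ∧ (A ^ (ℓ - 1)) v ≠ 0 := by
    by_contra h
    push_neg at h
    apply hℓ1
    have : (⊤ : Submodule ℂ V) ≤ LinearMap.ker (A ^ (ℓ - 1)) := by
      rw [← hsup]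
      exact iSup_le fun i x hx => LinearMap.mem_ker.2 (h i x hx)
    ext x
    simpa using LinearMap.mem_ker.1 (this (Submodule.mem_top (x := x)))
  -- homogeneity of the iterates
  have hhom' : ∀ (d : ZMod n) (y : V), y ∈ M d → ∀ k : ℕ,
      (A ^ k) y ∈ M (d + (k : ZMod n)) := by
    intro d y hy k
    induction k with
    | zero => simpa using hy
    | succ k ih =>
        have : A ((A ^ k) y) ∈ M (d + (k : ZMod n) + 1) :=
          hA _ (Submodule.mem_map_of_mem ih)
        rw [pow_succ', Module.End.mul_apply]
        convert this using 2
        push_cast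
        ring
  have hhom : ∀ k : ℕ, (A ^ k) v ∈ M (i₀ + (k : ZMod n)) := hhom' i₀ v hv
  -- the degree of A^(ℓ-1) v
  set d₀ : ZMod n := i₀ + ((ℓ - 1 : ℕ) : ZMod n) with hd₀
  have hvd₀ : (A ^ (ℓ - 1)) v ∈ M d₀ := hhom (ℓ - 1)
  -- a dual functional supported in degree d₀
  obtain ⟨g, hg⟩ : ∃ g : Module.Dual ℂ V, g ((A ^ (ℓ - 1)) v) ≠ 0 := by
    by_contra h
    push_neg at h
    exact hvne ((Module.forall_dual_apply_eq_zero_iff ℂ _).1 h)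
  -- the projection onto degree d₀ and the functional f
  let π : ZMod n → (V →ₗ[ℂ] V) := fun d =>
    { toFun := fun x => ((DirectSum.decompose M x) d : V)
      map_add' := fun x y => by
        show ((DirectSum.decompose M (x + y)) d : V) = _
        rw [DirectSum.decompose_add]; rfl
      map_smul' := fun c x => by
        show ((DirectSum.decompose M (c • x)) d : V) = _
        rw [DirectSum.decompose_smul]; rfl }
  have hπ_mem : ∀ d x, π d x ∈ M d := fun d x => ((DirectSum.decompose M x) d).2
  have hπ_same : ∀ d x, x ∈ M d → π d x = x := fun d x hx =>
    DirectSum.decompose_of_mem_same M hx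
  have hπ_ne : ∀ d d' x, x ∈ M d → d ≠ d' → π d' x = 0 := fun d d' x hx hne' =>
    DirectSum.decompose_of_mem_ne M hx hne'
  have hπ_sum : ∀ x : V, ∑ d ∈ (DirectSum.decompose M x).support, π d x = x := fun x =>
    DirectSum.sum_support_decompose M x
  let f : Module.Dual ℂ V := g ∘ₗ π d₀
  have hfv : f ((A ^ (ℓ - 1)) v) ≠ 0 := by
    simpa [f, LinearMap.comp_apply, hπ_same d₀ _ hvd₀] using hg
  -- f vanishes on homogeneous elements of degree ≠ d₀
  have hf_ne : ∀ (d : ZMod n) (x : V), x ∈ M d → d ≠ d₀ → f x = 0 := by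
    intro d x hx hd
    simp [f, LinearMap.comp_apply, hπ_ne d d₀ x hx hd]
  -- f (A^k x) = 0 for k ≥ ℓ
  have hf_big : ∀ (k : ℕ), ℓ ≤ k → ∀ x : V, f ((A ^ k) x) = 0 := by
    intro k hk x
    have : A ^ k = (A ^ (k - ℓ)) * (A ^ ℓ) := by rw [← pow_add]; congr 1; omega
    rw [this, hℓ0]
    simp
  -- the cyclic submodule W
  set W : Submodule ℂ V := Submodule.span ℂ (Set.range fun k : Fin ℓ => (A ^ (k : ℕ)) v)
    with hW
  -- the candidate complement P
  set P : Submodule ℂ V := ⨅ k : Fin ℓ, LinearMap.ker (f ∘ₗ (A ^ (k : ℕ))) with hP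
  have hPmem : ∀ x : V, x ∈ P ↔ ∀ k : ℕ, k < ℓ → f ((A ^ k) x) = 0 := by
    intro x
    simp only [hP, Submodule.mem_iInf, LinearMap.mem_ker, LinearMap.comp_apply]
    constructor
    · intro h k hk; exact h ⟨k, hk⟩
    · intro h k; exact h k k.isLt
  -- P is A-stable
  have hPA : P.map A ≤ P := by
    rintro _ ⟨x, hx, rfl⟩
    refine (hPmem _).2 ?_
    have hx := (hPmem _).1 hx
    intro k hk
    have : f ((A ^ k) (A x)) = f ((A ^ (k + 1)) x) := by
      rw [pow_succ, Module.End.mul_apply]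
    rw [this]
    rcases Nat.lt_or_ge (k + 1) ℓ with h | h
    · exact hx _ h
    · exact hf_big _ h x
  -- W is A-stable
  have hWA : W.map A ≤ W := by
    rw [hW, Submodule.map_span, Submodule.span_le]
    rintro _ ⟨_, ⟨k, rfl⟩, rfl⟩
    have : A ((A ^ (k : ℕ)) v) = (A ^ ((k : ℕ) + 1)) v := by
      rw [pow_succ', Module.End.mul_apply]
    rw [this]
    rcases Nat.lt_or_ge ((k : ℕ) + 1) ℓ with h | h
    · exact Submodule.subset_span ⟨⟨(k : ℕ) + 1, h⟩, rfl⟩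
    · have : A ^ ((k : ℕ) + 1) = (A ^ ((k : ℕ) + 1 - ℓ)) * (A ^ ℓ) := by
        rw [← pow_add]; congr 1; omega
      rw [this, hℓ0]
      simp
  -- W is graded
  have hWgr : W = ⨆ d : ZMod n, W ⊓ M d := by
    apply le_antisymm
    · rw [hW, Submodule.span_le]
      rintro _ ⟨k, rfl⟩
      exact le_iSup (fun d => W ⊓ M d) (i₀ + ((k : ℕ) : ZMod n))
        ⟨Submodule.subset_span ⟨k, rfl⟩, hhom (k : ℕ)⟩
    · exact iSup_le fun d => inf_le_left
  -- P is graded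
  have hPgr : P = ⨆ d : ZMod n, P ⊓ M d := by
    apply le_antisymm
    · intro x hx
      -- each homogeneous component of x lies in P
      have hcomp : ∀ d : ZMod n, π d x ∈ P := by
        intro d
        refine (hPmem _).2 ?_
        intro k hk
        rcases eq_or_ne (d + (k : ZMod n)) d₀ with hd | hd
        · -- the only component contributing to f (A^k x)
          have hsum : f ((A ^ k) x) =
              ∑ d' ∈ (DirectSum.decompose M x).support, f ((A ^ k) (π d' x)) := by
            conv_lhs => rw [← hπ_sum x]
            rw [map_sum, map_sum]
          have hothers : ∀ d' ∈ (DirectSum.decompose M x).support,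
              d' ≠ d → f ((A ^ k) (π d' x)) = 0 := by
            intro d' _ hd'
            have hmem : (A ^ k) (π d' x) ∈ M (d' + (k : ZMod n)) :=
              hhom' d' (π d' x) (hπ_mem d' x) k
            apply hf_ne _ _ hmem
            intro hcon
            exact hd' (by
              have : d' + (k : ZMod n) = d + (k : ZMod n) := by rw [hcon, hd]
              exact add_right_cancel this)
          by_cases hmem : d ∈ (DirectSum.decompose M x).support
          · have h1 := Finset.sum_eq_single_of_mem d hmem hothers
            have h2 : f ((A ^ k) x) = 0 := (hPmem x).1 hx k hk
            rw [← h1, ← hsum, h2]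
          · have hz : π d x = 0 := by
              simpa [π] using DFinsupp.notMem_support_iff.1 hmem
            simp [hz]
        · -- the component has wrong degree, f kills it directly
          have hmem : (A ^ k) (π d x) ∈ M (d + (k : ZMod n)) :=
            hhom' d (π d x) (hπ_mem d x) k
          exact hf_ne _ _ hmem hd
      have hsum_mem : (∑ d ∈ (DirectSum.decompose M x).support, π d x)
          ∈ ⨆ d : ZMod n, P ⊓ M d :=
        Submodule.sum_mem _ fun d _ => le_iSup (fun d => P ⊓ M d) d ⟨hcomp d, hπ_mem d x⟩
      rwa [hπ_sum x] at hsum_mem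
    · exact iSup_le fun d => inf_le_left
  -- key computation: coefficients of an element of W ∩ P all vanish
  have hkey : ∀ (c : Fin ℓ → ℂ) (x : V), (∑ k : Fin ℓ, c k • (A ^ (k : ℕ)) v) = x →
      x ∈ P → ∀ k : Fin ℓ, c k = 0 := by
    intro c x hc hxP
    have main : ∀ m : ℕ, ∀ k : Fin ℓ, (k : ℕ) = m → c k = 0 := by
      intro m
      induction m using Nat.strong_induction_on with
      | _ m ih =>
        intro k hk
        have hm : m < ℓ := hk ▸ k.isLt
        have hlt : ℓ - 1 - m < ℓ := by omega
        have h1 : f ((A ^ (ℓ - 1 - m)) x) = 0 := (hPmem x).1 hxP _ hlt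
        rw [← hc, map_sum, map_sum] at h1
        have h2 : ∀ j : Fin ℓ, j ≠ k → f ((A ^ (ℓ - 1 - m)) (c j • (A ^ (j : ℕ)) v)) = 0 := by
          intro j hj
          rw [map_smul, map_smul, smul_eq_mul]
          rcases Nat.lt_or_ge (j : ℕ) m with h | h
          · rw [ih _ h j rfl]; ring
          · have hjm : m < (j : ℕ) := by
              rcases Nat.lt_or_ge m (j : ℕ) with h' | h'
              · exact h'
              · exact absurd (Fin.ext (by omega : (j : ℕ) = (k : ℕ))) hj
            have he : (A ^ (ℓ - 1 - m)) ((A ^ (j : ℕ)) v) = (A ^ (ℓ - 1 - m + (j : ℕ))) v := by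
              rw [pow_add, Module.End.mul_apply]
            rw [he, hf_big _ (by omega) v]
            ring
        have h3 := Finset.sum_eq_single_of_mem k (Finset.mem_univ k) fun j _ hj => h2 j hj
        rw [h3] at h1
        have hexp : ℓ - 1 - m + (k : ℕ) = ℓ - 1 := by omega
        have h4 : (A ^ (ℓ - 1 - m)) ((A ^ (k : ℕ)) v) = (A ^ (ℓ - 1)) v := by
          rw [← Module.End.mul_apply, ← pow_add, hexp]
        rw [map_smul, map_smul, smul_eq_mul, h4] at h1
        exact (mul_eq_zero.1 h1).resolve_right hfv
    exact fun k => main (k : ℕ) k rfl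
  -- linear independence of the iterates
  have hli : LinearIndependent ℂ (fun k : Fin ℓ => (A ^ (k : ℕ)) v) := by
    rw [Fintype.linearIndependent_iff]
    intro c hc
    exact hkey c 0 hc (zero_mem P)
  -- W ∩ P = ⊥
  have hWP : W ⊓ P = ⊥ := by
    rw [eq_bot_iff]
    rintro x ⟨hxW, hxP⟩
    obtain ⟨c, hc⟩ := (Submodule.mem_span_range_iff_exists_fun ℂ).1 hxW
    have h0 := hkey c x hc hxP
    rw [Submodule.mem_bot, ← hc]
    exact Finset.sum_eq_zero fun k _ => by rw [h0 k, zero_smul]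
  -- P ⊔ W = ⊤ by a dimension count
  have hrW : Module.finrank ℂ W = ℓ := by
    rw [hW]
    rw [finrank_span_eq_card hli]
    simp
  have hrP : Module.finrank ℂ V ≤ Module.finrank ℂ P + ℓ := by
    have hker : LinearMap.ker (LinearMap.pi fun k : Fin ℓ => f ∘ₗ (A ^ (k : ℕ))) = P := by
      rw [LinearMap.ker_pi]
    have h1 := LinearMap.finrank_range_add_finrank_ker
      (LinearMap.pi fun k : Fin ℓ => f ∘ₗ (A ^ (k : ℕ)))
    have h2 : Module.finrank ℂ
        (LinearMap.range (LinearMap.pi fun k : Fin ℓ => f ∘ₗ (A ^ (k : ℕ)))) ≤ ℓ := by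
      refine le_trans (Submodule.finrank_le _) ?_
      simp [Module.finrank_fin_fun]
    rw [hker] at h1
    omega
  have hPW_top : P ⊔ W = ⊤ := by
    apply Submodule.eq_top_of_finrank_eq
    have h1 := Submodule.finrank_sup_add_finrank_inf_eq P W
    have h2 : P ⊓ W = ⊥ := by rw [inf_comm]; exact hWP
    rw [h2] at h1
    simp only [finrank_bot, add_zero] at h1
    have h3 : Module.finrank ℂ ↥(P ⊔ W) ≤ Module.finrank ℂ V := Submodule.finrank_le _
    omega
  -- indecomposability forces W = ⊤
  have hcompl : IsCompl P W := ⟨disjoint_iff.2 (by rw [inf_comm]; exact hWP),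
    codisjoint_iff.2 hPW_top⟩
  have hvW : v ∈ W := by
    rw [hW]
    refine Submodule.subset_span ⟨⟨0, by omega⟩, ?_⟩
    simp
  have hWtop : W = ⊤ := by
    rcases hindec P W hPgr hWgr hPA hWA hcompl with hP0 | hW0
    · rw [hP0] at hPW_top
      simpa using hPW_top
    · exfalso
      apply hvne
      have : v = 0 := by
        rw [hW0] at hvW
        simpa using hvW
      rw [this]
      simp
  -- the basis from the cyclic vector
  let B : Module.Basis (Fin ℓ) ℂ V := Module.Basis.mk hli (hW.symm.trans hWtop).ge
  have hBk : ∀ k : Fin ℓ, B k = (A ^ (k : ℕ)) v := fun k => Module.Basis.mk_apply hli _ k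
  let e : V ≃ₗ[ℂ] (Fin ℓ → ℂ) := B.equivFun
  have heB : ∀ k : Fin ℓ, e (B k) = Pi.single k 1 := by
    intro k
    funext j
    rw [show e (B k) j = B.equivFun (B k) j from rfl, Module.Basis.equivFun_self, Pi.single_apply]
    by_cases h : k = j
    · simp [h]
    · simp [h, Ne.symm h]
  -- the graded pieces in terms of the basis
  have hMd : ∀ d : ZMod n, M d = Submodule.span ℂ
      ((fun k : Fin ℓ => (A ^ (k : ℕ)) v) '' {k : Fin ℓ | i₀ + ((k : ℕ) : ZMod n) = d}) := by
    intro d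
    set S : ZMod n → Submodule ℂ V := fun d => Submodule.span ℂ
      ((fun k : Fin ℓ => (A ^ (k : ℕ)) v) '' {k : Fin ℓ | i₀ + ((k : ℕ) : ZMod n) = d}) with hS
    have hSM : ∀ d', S d' ≤ M d' := by
      intro d'
      rw [hS, Submodule.span_le]
      rintro _ ⟨k, hk, rfl⟩
      exact hk ▸ hhom (k : ℕ)
    have hSsup : (⨆ d', S d') = ⊤ := by
      rw [← top_le_iff, ← hWtop, hW, Submodule.span_le]
      rintro _ ⟨k, rfl⟩
      exact le_iSup S (i₀ + ((k : ℕ) : ZMod n))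
        (Submodule.subset_span ⟨k, rfl, rfl⟩)
    apply le_antisymm
    · intro x hx
      have hxS : π d x ∈ S d := by
        have hxtop : x ∈ ⨆ d', S d' := by rw [hSsup]; trivial
        refine Submodule.iSup_induction S hxtop (motive := fun y => π d y ∈ S d) ?_ ?_ ?_
        · intro d' y hy
          rcases eq_or_ne d' d with h | h
          · subst h
            rw [hπ_same d' y (hSM d' hy)]
            exact hy
          · rw [hπ_ne d' d y (hSM d' hy) h]
            exact zero_mem _
        · show π d 0 ∈ S d
          rw [map_zero]; exact zero_mem _
        · intro a b ha hb
          show π d (a + b) ∈ S d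
          rw [map_add]; exact add_mem ha hb
      rwa [hπ_same d x hx] at hxS
    · exact hSM d
  -- assemble the result
  refine ⟨i₀ + ((ℓ : ℕ) : ZMod n) - 1, ℓ, hℓpos, e, ?_, ?_⟩
  · intro d
    rw [hMd d, Submodule.map_span, UiGrade]
    congr 1
    ext u
    constructor
    · rintro ⟨_, ⟨k, hk, rfl⟩, rfl⟩
      refine ⟨k, ?_, ?_⟩
      · rw [← hk]
        push_cast
        ring
      · have := heB k
        rw [hBk k] at this
        simpa using this
    · rintro ⟨k, hk, rfl⟩
      refine ⟨(A ^ (k : ℕ)) v, ⟨k, ?_, rfl⟩, ?_⟩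
      · show i₀ + ((k : ℕ) : ZMod n) = _
        rw [← hk]
        push_cast
        ring
      · have := heB k
        rw [hBk k] at this
        simpa using this
  · -- intertwining
    have hcomm : (e : V →ₗ[ℂ] (Fin ℓ → ℂ)) ∘ₗ A = shiftL ℓ ∘ₗ (e : V →ₗ[ℂ] (Fin ℓ → ℂ)) := by
      apply Module.Basis.ext B
      intro k
      simp only [LinearMap.comp_apply, LinearEquiv.coe_coe]
      rw [heB k, hBk k]
      have hAk : A ((A ^ (k : ℕ)) v) = (A ^ ((k : ℕ) + 1)) v := by
        rw [pow_succ', Module.End.mul_apply]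
      rw [hAk]
      by_cases h : (k : ℕ) + 1 < ℓ
      · have : (A ^ ((k : ℕ) + 1)) v = B ⟨(k : ℕ) + 1, h⟩ := (hBk ⟨(k : ℕ) + 1, h⟩).symm
        rw [this, heB]
        funext m
        by_cases hm : (m : ℕ) = 0
        · have hne1 : ¬((m : ℕ) = (k : ℕ) + 1) := by omega
          simp [shiftL, hm, Pi.single_apply, Fin.ext_iff, hne1]
        · have h1 : ((m : ℕ) - 1 = (k : ℕ)) ↔ ((m : ℕ) = (k : ℕ) + 1) := by omega
          simp [shiftL, hm, Pi.single_apply, Fin.ext_iff, h1]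
      · have hkℓ : (k : ℕ) + 1 = ℓ := by omega
        have hz : (A ^ ((k : ℕ) + 1)) v = 0 := by
          rw [hkℓ, hℓ0]
          simp
        rw [hz, map_zero]
        funext m
        by_cases hm : (m : ℕ) = 0
        · simp [shiftL, hm]
        · have hne1 : ¬((m : ℕ) - 1 = (k : ℕ)) := by
            have := m.isLt
            omega
          simp [shiftL, hm, Pi.single_apply, Fin.ext_iff, hne1]
    intro x
    exact LinearMap.congr_fun hcomm x
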